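/- (Correctness of the sequential at-most-one encoding, constraint (7)) Let n ≥ 2 and x_1, …, x_n be Boolean values. Then at most one of x_1, …, x_n is true if and only if there exist Boolean values p_1, …, p_{n−1} such that all of the following clauses hold: (¬x_1 ∨ p_1), (¬x_n ∨ ¬p_{n−1}), and for every i with 1 < i < n: (¬x_i ∨ p_i), (¬p_{i−1} ∨ p_i), and (¬x_i ∨ ¬p_{i−1}). -/
import Mathlib


/-- Correctness of the sequential at-most-one encoding (constraint (7)):
for `n ≥ 2` and Boolean values `x_1, …, x_n`, at most one of the `x_i`
(`i ∈ {1, …, n}`) is true iff there exist Boolean values `p_1, …, p_{n-1}`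
satisfying the clauses `(¬x_1 ∨ p_1)`, `(¬x_n ∨ ¬p_{n-1})`, and for every
`1 < i < n`: `(¬x_i ∨ p_i)`, `(¬p_{i-1} ∨ p_i)` and `(¬x_i ∨ ¬p_{i-1})`. -/
theorem sequential_at_most_one (n : ℕ) (hn : 2 ≤ n) (x : ℕ → Bool) :
    ((Finset.Icc 1 n).filter (fun i => x i = true)).card ≤ 1 ↔
    ∃ p : ℕ → Bool,
      (x 1 = false ∨ p 1 = true) ∧
      (x n = false ∨ p (n - 1) = false) ∧
      (∀ i : ℕ, 1 < i → i < n →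
        (x i = false ∨ p i = true) ∧
        (p (i - 1) = false ∨ p i = true) ∧
        (x i = false ∨ p (i - 1) = false)) := by
  constructor
  · intro h
    have key : ∀ a b : ℕ, 1 ≤ a → a < b → b ≤ n → x a = true → x b = true → False := by
      intro a b ha hab hbn hxa hxb
      have hsub : ({a, b} : Finset ℕ) ⊆ (Finset.Icc 1 n).filter (fun i => x i = true) := by
        intro t ht
        rcases Finset.mem_insert.1 ht with rfl | ht
        · exact Finset.mem_filter.2 ⟨Finset.mem_Icc.2 ⟨ha, by omega⟩, hxa⟩
        · rw [Finset.mem_singleton] at ht; subst ht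
          exact Finset.mem_filter.2 ⟨Finset.mem_Icc.2 ⟨by omega, hbn⟩, hxb⟩
      have h2 : ({a, b} : Finset ℕ).card = 2 := Finset.card_pair (by omega)
      have := Finset.card_le_card hsub
      omega
    have hiff : ∀ i, (List.range i).any (fun j => x (j+1)) = true ↔
        ∃ j, 1 ≤ j ∧ j ≤ i ∧ x j = true := by
      intro i
      rw [List.any_eq_true]
      constructor
      · rintro ⟨a, ha, hx⟩
        rw [List.mem_range] at ha
        exact ⟨a + 1, by omega, by omega, hx⟩
      · rintro ⟨j, hj1, hj2, hx⟩
        refine ⟨j - 1, List.mem_range.2 (by omega), ?_⟩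
        have hje : j - 1 + 1 = j := by omega
        rw [hje]; exact hx
    have hiff' : ∀ i, (List.range i).any (fun j => x (j+1)) = false ↔
        ¬ ∃ j, 1 ≤ j ∧ j ≤ i ∧ x j = true := by
      intro i
      rw [← hiff]
      cases (List.range i).any (fun j => x (j+1)) <;> simp
    refine ⟨fun i => (List.range i).any (fun j => x (j+1)), ?_, ?_, ?_⟩
    · cases hx1 : x 1 with
      | false => exact Or.inl rfl
      | true =>
        right
        exact (hiff 1).2 ⟨1, le_rfl, le_rfl, hx1⟩
    · cases hxn : x n with
      | false => exact Or.inl rfl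
      | true =>
        right
        rw [hiff' (n-1)]
        rintro ⟨j, hj1, hj2, hxj⟩
        exact key j n hj1 (by omega) le_rfl hxj hxn
    · intro i h1i hin
      refine ⟨?_, ?_, ?_⟩
      · cases hxi : x i with
        | false => exact Or.inl rfl
        | true =>
          right
          exact (hiff i).2 ⟨i, by omega, le_rfl, hxi⟩
      · by_cases hp : (List.range (i-1)).any (fun j => x (j+1)) = true
        · right
          obtain ⟨j, hj1, hj2, hxj⟩ := (hiff (i-1)).1 hp
          exact (hiff i).2 ⟨j, hj1, by omega, hxj⟩
        · left
          simpa using hp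
      · cases hxi : x i with
        | false => exact Or.inl rfl
        | true =>
          right
          rw [hiff' (i-1)]
          rintro ⟨j, hj1, hj2, hxj⟩
          exact key j i hj1 (by omega) (by omega) hxj hxi
  · rintro ⟨p, h1, h2, h3⟩
    have prop : ∀ j, 1 ≤ j → j < n → x j = true → ∀ k, j ≤ k → k < n → p k = true := by
      intro j hj hjn hxj k hjk hkn
      induction k with
      | zero => omega
      | succ k ih =>
        rcases Nat.lt_or_ge j (k + 1) with hlt | hge
        · have hpk : p k = true := ih (by omega) (by omega)
          have hc := (h3 (k + 1) (by omega) hkn).2.1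
          simpa [hpk] using hc
        · have hjk1 : j = k + 1 := by omega
          subst hjk1
          rcases Nat.lt_or_ge 1 (k + 1) with hgt | hle
          · rcases (h3 (k + 1) hgt hkn).1 with hh | hh
            · rw [hxj] at hh; cases hh
            · exact hh
          · have h1e : k + 1 = 1 := by omega
            rw [h1e] at hxj ⊢
            rcases h1 with hh | hh
            · rw [hxj] at hh; cases hh
            · exact hh
    have main : ∀ a b : ℕ, 1 ≤ a → a < b → b ≤ n → x a = true → x b = true → False := by
      intro a b ha hab hbn hxa hxb
      have hpb : p (b - 1) = true := prop a ha (by omega) hxa (b - 1) (by omega) (by omega)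
      rcases Nat.eq_or_lt_of_le hbn with hb | hb
      · subst hb
        rcases h2 with hh | hh
        · rw [hxb] at hh; cases hh
        · rw [hpb] at hh; cases hh
      · rcases (h3 b (by omega) hb).2.2 with hh | hh
        · rw [hxb] at hh; cases hh
        · rw [hpb] at hh; cases hh
    rw [Finset.card_le_one]
    intro a ha b hb
    rw [Finset.mem_filter, Finset.mem_Icc] at ha hb
    by_contra hne
    rcases lt_trichotomy a b with hlt | heq | hgt
    · exact main a b ha.1.1 hlt hb.1.2 ha.2 hb.2
    · exact hne heq
    · exact main b a hb.1.1 hgt ha.1.2 hb.2 ha.2
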